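/- For every t ∈ k, the set {u ∈ k : u ≠ t and v(u) ∈ T(t)} has exactly q − 2 elements; that is, the tangent line to the curve at the point of parameter t meets the affine part of the curve in exactly q − 2 points besides the point of tangency. -/

import Mathlib

/-- The affine parametrization of the curve
`φ(1:t) = (1 : t : t² − t^q : t^{qⁿ} − t^{q^{2n}} : t(t^{qⁿ} − t^{q^{2n}}))`. -/
def curveVec {k : Type*} [Field k] (q n : ℕ) (t : k) : Fin 5 → k :=
  ![1, t, t ^ 2 - t ^ q, t ^ q ^ n - t ^ q ^ (2 * n),
    t * (t ^ q ^ n - t ^ q ^ (2 * n))]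

/-- The coordinatewise derivative of `curveVec`. -/
def curveVec' {k : Type*} [Field k] (q n : ℕ) (t : k) : Fin 5 → k :=
  ![0, 1, 2 * t, 0, t ^ q ^ n - t ^ q ^ (2 * n)]

/-- The affine cone of the tangent line at the point of parameter `t`. -/
def tangentSpan (k : Type*) [Field k] (q n : ℕ) (t : k) : Submodule k (Fin 5 → k) :=
  Submodule.span k {curveVec q n t, curveVec' q n t}

theorem stmt2 (k : Type*) [Field k] [IsAlgClosed k] (p q n : ℕ) (hp : p.Prime)
    [CharP k p] (hp2 : 2 < p) (hq : ∃ m : ℕ, 0 < m ∧ q = p ^ m) (hn : 1 ≤ n)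
    (hdvd : (q - 2) ∣ (q ^ n - 1)) (t : k) :
    {u : k | u ≠ t ∧ curveVec q n u ∈ tangentSpan k q n t}.ncard = q - 2 := by
  haveI : Fact p.Prime := ⟨hp⟩
  obtain ⟨m, hm0, hqm⟩ := hq
  -- basic numerics
  have hq3 : 3 ≤ q := by
    have : p ^ 1 ≤ p ^ m := Nat.pow_le_pow_right hp.pos hm0
    simpa [hqm] using le_trans hp2 (by simpa using this)
  have hq2pos : 0 < q - 2 := by omega
  -- Frobenius
  have hF : ∀ (x y : k) (j : ℕ), (x + y) ^ q ^ j = x ^ q ^ j + y ^ q ^ j := by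
    intro x y j
    rw [hqm, ← pow_mul]
    exact add_pow_char_pow x y p (m * j)
  have hFq : ∀ (x y : k), (x + y) ^ q = x ^ q + y ^ q := by
    intro x y; simpa using hF x y 1
  -- the set is the translate of the (q-2)-th roots of unity
  have hset : {u : k | u ≠ t ∧ curveVec q n u ∈ tangentSpan k q n t}
      = (fun s : k => s + t) '' ↑(Polynomial.nthRootsFinset (q - 2) (1 : k)) := by
    ext u
    simp only [Set.mem_setOf_eq, Set.mem_image, Finset.mem_coe,
      Polynomial.mem_nthRootsFinset hq2pos (1 : k)]
    constructor
    · rintro ⟨hut, hmem⟩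
      refine ⟨u - t, ?_, by ring⟩
      rw [tangentSpan, Submodule.mem_span_pair] at hmem
      obtain ⟨a, b, hab⟩ := hmem
      have h0 := congrFun hab 0
      have h1 := congrFun hab 1
      have h2 := congrFun hab 2
      simp only [curveVec, curveVec', Pi.add_apply, Pi.smul_apply, smul_eq_mul,
        Matrix.cons_val_zero, Matrix.cons_val_one, Matrix.head_cons,
        Matrix.cons_val_two, Matrix.tail_cons] at h0 h1 h2
      have ha : a = 1 := by linear_combination h0
      have hb : b = u - t := by rw [ha] at h1; linear_combination h1
      rw [ha, hb] at h2
      -- (u - t)^q = (u-t)^2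
      have hfr : (u - t) ^ q = u ^ q - t ^ q := by
        have := hFq (u - t) t; rw [sub_add_cancel] at this; linear_combination -this
      have hkey : (u - t) ^ q = (u - t) ^ 2 := by
        rw [hfr]; linear_combination h2
      have hs0 : u - t ≠ 0 := sub_ne_zero.mpr hut
      have : (u - t) ^ (q - 2) * (u - t) ^ 2 = 1 * (u - t) ^ 2 := by
        rw [← pow_add, Nat.sub_add_cancel (by omega), hkey, one_mul]
      exact mul_right_cancel₀ (pow_ne_zero 2 hs0) this
    · rintro ⟨s, hs, rfl⟩
      have hs0 : s ≠ 0 := by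
        rintro rfl
        rw [zero_pow (by omega)] at hs
        exact one_ne_zero hs.symm
      refine ⟨by simpa using hs0, ?_⟩
      -- power facts about s
      have hsq : s ^ q = s ^ 2 := by
        rw [← Nat.sub_add_cancel (show 2 ≤ q by omega), pow_add, hs, one_mul]
      have hsn : s ^ q ^ n = s := by
        obtain ⟨c, hc⟩ := hdvd
        have h1 : s ^ (q ^ n - 1) = 1 := by rw [hc, pow_mul, hs, one_pow]
        have hqn1 : q ^ n - 1 + 1 = q ^ n :=
          Nat.sub_add_cancel (Nat.one_le_pow _ _ (by omega))
        rw [← hqn1, pow_add, pow_one, h1, one_mul]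
      have hs2n : s ^ q ^ (2 * n) = s := by
        have : q ^ (2 * n) = q ^ n * q ^ n := by rw [two_mul, pow_add]
        rw [this, pow_mul, hsn, hsn]
      rw [tangentSpan, Submodule.mem_span_pair]
      refine ⟨1, s, ?_⟩
      funext i
      have hFn := hF s t n
      have hF2n := hF s t (2 * n)
      rw [hsn] at hFn
      rw [hs2n] at hF2n
      fin_cases i
      · show (1 : k) * 1 + s * 0 = 1
        ring
      · show (1 : k) * t + s * 1 = s + t
        ring
      · show (1 : k) * (t ^ 2 - t ^ q) + s * (2 * t) = (s + t) ^ 2 - (s + t) ^ q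
        rw [hFq s t, hsq]; ring
      · show (1 : k) * (t ^ q ^ n - t ^ q ^ (2 * n)) + s * 0
            = (s + t) ^ q ^ n - (s + t) ^ q ^ (2 * n)
        rw [hFn, hF2n]; ring
      · show (1 : k) * (t * (t ^ q ^ n - t ^ q ^ (2 * n)))
            + s * (t ^ q ^ n - t ^ q ^ (2 * n))
            = (s + t) * ((s + t) ^ q ^ n - (s + t) ^ q ^ (2 * n))
        rw [hFn, hF2n]; ring
  -- count
  rw [hset, Set.ncard_image_of_injective _ (add_left_injective t),
    Set.ncard_coe_finset]
  have hne : NeZero ((q - 2 : ℕ) : k) := by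
    constructor
    rw [Ne, CharP.cast_eq_zero_iff k p]
    intro hdv
    have hpq : p ∣ q := hqm ▸ dvd_pow_self p hm0.ne'
    have : p ∣ q - (q - 2) := Nat.dvd_sub hpq hdv
    rw [show q - (q - 2) = 2 by omega] at this
    exact absurd (Nat.le_of_dvd (by norm_num) this) (by omega)
  obtain ⟨ζ, hζ⟩ := HasEnoughRootsOfUnity.exists_primitiveRoot k (q - 2)
  exact hζ.card_nthRootsFinset
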